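/- If x₁ and x₂ are solutions of x' = A(t)x on I and q₁, q₂ ∈ ℍ are quaternion constants, then the function t ↦ x₁(t)q₁ + x₂(t)q₂, where each scalar multiplies every component on the right, is also a solution of x' = A(t)x on I. -/

import Mathlib

/-- Superposition principle: right quaternionic linear combinations of solutions of
`x' = A(t) x` are again solutions. -/
theorem qde_superposition (A : ℝ → Matrix (Fin 2) (Fin 2) (Quaternion ℝ)) (I : Set ℝ)
    (x₁ x₂ : ℝ → Fin 2 → Quaternion ℝ)
    (hx₁ : ∀ t ∈ I, HasDerivAt x₁ ((A t).mulVec (x₁ t)) t)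
    (hx₂ : ∀ t ∈ I, HasDerivAt x₂ ((A t).mulVec (x₂ t)) t)
    (q₁ q₂ : Quaternion ℝ) :
    ∀ t ∈ I, HasDerivAt (fun s => fun i => x₁ s i * q₁ + x₂ s i * q₂)
      ((A t).mulVec (fun i => x₁ t i * q₁ + x₂ t i * q₂)) t := by
  intro t ht
  rw [hasDerivAt_pi]
  intro i
  have h1 := hasDerivAt_pi.mp (hx₁ t ht) i
  have h2 := hasDerivAt_pi.mp (hx₂ t ht) i
  have := (h1.mul_const q₁).add (h2.mul_const q₂)
  convert this using 1
  · rfl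
  simp [Matrix.mulVec, dotProduct, mul_add, Finset.sum_add_distrib,
    Finset.sum_mul, mul_assoc]
  noncomm_ring
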